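/- Let k ≥ 2 be an integer and let a, b > 0 be positive reals. Then −ln(1 − (k−1)/k³ + a/(bk)) − ln(1 − (k−1)/k³ + b/(ak)) ≤ −1/(6k). -/

import Mathlib

set_option maxHeartbeats 1000000


/-- for every integer `k ≥ 2` and positive reals `a, b`,
`−ln(1 − (k−1)/k³ + a/(bk)) − ln(1 − (k−1)/k³ + b/(ak)) ≤ −1/(6k)`. -/
theorem stmt13 (k : ℕ) (hk : 2 ≤ k) (a b : ℝ) (ha : 0 < a) (hb : 0 < b) :
    -Real.log (1 - ((k : ℝ) - 1) / (k : ℝ) ^ 3 + a / (b * k))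
      - Real.log (1 - ((k : ℝ) - 1) / (k : ℝ) ^ 3 + b / (a * k)) ≤ -(1 / (6 * k)) := by
  have hK : (2:ℝ) ≤ (k:ℝ) := by exact_mod_cast hk
  set K : ℝ := (k:ℝ) with hKdef
  have hK0 : 0 < K := by linarith
  set c : ℝ := 1 - (K - 1) / K ^ 3 with hcdef
  set x : ℝ := a / (b * K) with hxdef
  set y : ℝ := b / (a * K) with hydef
  have hx : 0 < x := by rw [hxdef]; positivity
  have hy : 0 < y := by rw [hydef]; positivity
  have hc : 1 - 1/K^2 ≤ c := by
    rw [hcdef, sub_le_sub_iff_left, div_le_div_iff₀ (by positivity) (by positivity)]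
    nlinarith
  have hxy : x * y = 1 / K^2 := by
    rw [hxdef, hydef]; field_simp
  have hsum : 2 / K ≤ x + y := by
    rw [hxdef, hydef, div_add_div _ _ (by positivity) (by positivity),
      div_le_div_iff₀ (by positivity) (by positivity)]
    nlinarith [sq_nonneg (a - b)]
  clear_value K c x y
  have hq : 1/K^2 ≤ 1/4 := by
    rw [div_le_div_iff₀ (by positivity) (by norm_num)]; nlinarith
  have hiK : 0 < 1/K := by positivity
  have hcpos : 0 < c := by linarith
  have hP1 : 0 < c + x := by linarith
  have hP2 : 0 < c + y := by linarith
  have hPP : 6*K/(6*K-1) ≤ (c + x) * (c + y) := by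
    rw [div_le_iff₀ (by linarith)]
    have hexp : (c + x) * (c + y) = c^2 + c*(x+y) + x*y := by ring
    have h1 : c^2 + c*(2/K) + 1/K^2 ≤ (c + x) * (c + y) := by
      rw [hexp, hxy]
      have := mul_le_mul_of_nonneg_left hsum hcpos.le
      linarith
    have h2 : 6*K ≤ (c^2 + c*(2/K) + 1/K^2) * (6*K - 1) := by
      have hc2 : (1 - 1/K^2 + 1/K)^2 ≤ c^2 + c*(2/K) + 1/K^2 := by
        have h4 : (1 - 1/K^2 + 1/K)^2 ≤ (c + 1/K)^2 := by
          apply pow_le_pow_left₀ (by linarith) (by linarith)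
        have h5 : (c + 1/K)^2 = c^2 + c*(2/K) + 1/K^2 := by field_simp; ring
        linarith
      have h3 : 6*K ≤ (1 - 1/K^2 + 1/K)^2 * (6*K - 1) := by
        have e : 1 - 1/K^2 + 1/K = (K^2 + K - 1)/K^2 := by field_simp; ring
        rw [e, div_pow, div_mul_eq_mul_div, le_div_iff₀ (by positivity)]
        nlinarith [mul_nonneg (by linarith : (0:ℝ) ≤ K - 2) (pow_pos hK0 3).le,
          (pow_pos hK0 3), (pow_pos hK0 2), hK0, hK]
      nlinarith [hc2, h3]
    nlinarith [mul_le_mul_of_nonneg_right h1 (by linarith : (0:ℝ) ≤ 6*K - 1)]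
  have hPpos : 0 < (c + x) * (c + y) := mul_pos hP1 hP2
  have hlog : 1/(6*K) ≤ Real.log ((c + x) * (c + y)) := by
    have hinv : Real.log ((c + x) * (c + y))⁻¹ ≤ ((c + x) * (c + y))⁻¹ - 1 :=
      Real.log_le_sub_one_of_pos (by positivity)
    rw [Real.log_inv] at hinv
    have hdpos : 0 < 6*K/(6*K-1) := by
      apply div_pos <;> linarith
    have hinvle : ((c + x) * (c + y))⁻¹ ≤ (6*K-1)/(6*K) := by
      have h := inv_anti₀ hdpos hPP
      rwa [inv_div] at h
    have he : 1 - (6*K-1)/(6*K) = 1/(6*K) := by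
      field_simp
      ring
    linarith
  have hmul : Real.log ((c + x) * (c + y)) = Real.log (c + x) + Real.log (c + y) :=
    Real.log_mul hP1.ne' hP2.ne'
  rw [hmul] at hlog
  linarith
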